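/- Let Ω ⊆ ℝ³ be an open set, let ρ : Ω → ℝ be a harmonic function (Δρ = 0), and let f : Ω → ℂ be a nonvanishing scalar C² function with ∇f × ∇ρ = 0 in Ω. If φ : Ω → ℂ is a C² scalar function with ∇φ = ∇ρ/f², then ψ := f·φ is a solution of the stationary Schrödinger equation (−Δ + q)ψ = 0 in Ω, where q = Δf/f. -/

import Mathlib

open Quaternion

noncomputable section

/-- Points of ℝ³. -/
abbrev P3 := EuclideanSpace ℝ (Fin 3)

/-- Partial derivative ∂ₖ of a complex-valued function on ℝ³. -/
def pd (k : Fin 3) (F : P3 → ℂ) : P3 → ℂ :=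
  fun p => fderiv ℝ F p (EuclideanSpace.single k 1)

/-- The Laplacian Δ = ∂₁² + ∂₂² + ∂₃². -/
def lap3 (F : P3 → ℂ) : P3 → ℂ := fun p => ∑ k : Fin 3, pd k (pd k F) p

/-- Embedding of a complex scalar as a quaternion. -/
def qC (z : ℂ) : ℍ[ℂ] := ⟨z, 0, 0, 0⟩

/-- The quaternionic imaginary units e₁, e₂, e₃. -/
def qe : Fin 3 → ℍ[ℂ] := ![⟨0,1,0,0⟩, ⟨0,0,1,0⟩, ⟨0,0,0,1⟩]

/-- The eₖ-components of a quaternion. -/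
def qcomp : Fin 3 → ℍ[ℂ] → ℂ := ![QuaternionAlgebra.imI, QuaternionAlgebra.imJ, QuaternionAlgebra.imK]

/-- Quaternionic conjugation C_H. -/
def CH (q : ℍ[ℂ]) : ℍ[ℂ] := ⟨q.re, -q.imI, -q.imJ, -q.imK⟩

/-- Componentwise partial derivative of a quaternion-valued function. -/
def pdq (k : Fin 3) (W : P3 → ℍ[ℂ]) : P3 → ℍ[ℂ] :=
  fun p => ⟨pd k (fun x => (W x).re) p, pd k (fun x => (W x).imI) p,
            pd k (fun x => (W x).imJ) p, pd k (fun x => (W x).imK) p⟩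

/-- The Dirac (Moisil–Theodorescu) operator D Q = Σₖ eₖ ∂ₖ Q. -/
def Dq (W : P3 → ℍ[ℂ]) : P3 → ℍ[ℂ] := fun p => ∑ k : Fin 3, qe k * pdq k W p

/-- The right Dirac operator Dᵣ Q = Σₖ (∂ₖ Q) eₖ. -/
def Drq (W : P3 → ℍ[ℂ]) : P3 → ℍ[ℂ] := fun p => ∑ k : Fin 3, pdq k W p * qe k

/-- Gradient of a scalar function viewed as a purely vectorial quaternion. -/
def gradq (F : P3 → ℂ) : P3 → ℍ[ℂ] := fun p => ⟨0, pd 0 F p, pd 1 F p, pd 2 F p⟩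

/-- Divergence of (the vector part of) a quaternion-valued function. -/
def divq (W : P3 → ℍ[ℂ]) : P3 → ℂ :=
  fun p => pd 0 (fun x => (W x).imI) p + pd 1 (fun x => (W x).imJ) p + pd 2 (fun x => (W x).imK) p

/-- Rotor (curl) of (the vector part of) a quaternion-valued function. -/
def rotq (W : P3 → ℍ[ℂ]) : P3 → ℍ[ℂ] :=
  fun p => ⟨0,
    pd 1 (fun x => (W x).imK) p - pd 2 (fun x => (W x).imJ) p,
    pd 2 (fun x => (W x).imI) p - pd 0 (fun x => (W x).imK) p,
    pd 0 (fun x => (W x).imJ) p - pd 1 (fun x => (W x).imI) p⟩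

/-- Cross product of the vector parts of two quaternions. -/
def crossq (u v : ℍ[ℂ]) : ℍ[ℂ] :=
  ⟨0, u.imJ * v.imK - u.imK * v.imJ, u.imK * v.imI - u.imI * v.imK, u.imI * v.imJ - u.imJ * v.imI⟩

/-- Bilinear scalar product of the vector parts of two quaternions. -/
def dotq (u v : ℍ[ℂ]) : ℂ := u.imI * v.imI + u.imJ * v.imJ + u.imK * v.imK

/-- `Cⁿ` smoothness of a quaternion-valued function on a set, componentwise. -/
def QContDiffOn (n : ℕ) (W : P3 → ℍ[ℂ]) (Ω : Set P3) : Prop :=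
  ContDiffOn ℝ n (fun p => (W p).re) Ω ∧ ContDiffOn ℝ n (fun p => (W p).imI) Ω ∧
  ContDiffOn ℝ n (fun p => (W p).imJ) Ω ∧ ContDiffOn ℝ n (fun p => (W p).imK) Ω

/-- The pure-quaternion Df/f built from a nonvanishing scalar function f. -/
def DfF (f : P3 → ℂ) : P3 → ℍ[ℂ] := fun p => (f p)⁻¹ • gradq f p

lemma pd_contDiffOn {F : P3 → ℂ} {Ω : Set P3} (hΩ : IsOpen Ω)
    (hF : ContDiffOn ℝ 2 F Ω) (k : Fin 3) : ContDiffOn ℝ 1 (pd k F) Ω := by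
  have h : ContDiffOn ℝ 1 (fderiv ℝ F) Ω := hF.fderiv_of_isOpen hΩ (by norm_num)
  exact h.clm_apply contDiffOn_const

lemma diffAt_of_cd1 {F : P3 → ℂ} {Ω : Set P3} (hΩ : IsOpen Ω)
    (hF : ContDiffOn ℝ 1 F Ω) {p : P3} (hp : p ∈ Ω) : DifferentiableAt ℝ F p :=
  (hF.contDiffAt (hΩ.mem_nhds hp)).differentiableAt one_ne_zero

lemma pd_mul {g h : P3 → ℂ} {p : P3} (hg : DifferentiableAt ℝ g p)
    (hh : DifferentiableAt ℝ h p) (k : Fin 3) :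
    pd k (fun x => g x * h x) p = pd k g p * h p + g p * pd k h p := by
  simp only [pd, fderiv_fun_mul hg hh]
  simp [smul_eq_mul]; ring

lemma pd_add {g h : P3 → ℂ} {p : P3} (hg : DifferentiableAt ℝ g p)
    (hh : DifferentiableAt ℝ h p) (k : Fin 3) :
    pd k (fun x => g x + h x) p = pd k g p + pd k h p := by
  simp [pd, fderiv_fun_add hg hh]

lemma pd_congr {g h : P3 → ℂ} {Ω : Set P3} (hΩ : IsOpen Ω) (heq : ∀ x ∈ Ω, g x = h x)
    {p : P3} (hp : p ∈ Ω) (k : Fin 3) : pd k g p = pd k h p := by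
  have : g =ᶠ[nhds p] h := Filter.eventually_of_mem (hΩ.mem_nhds hp) heq
  simp [pd, this.fderiv_eq]

/-- if ρ is harmonic, ∇f × ∇ρ = 0, and φ is a scalar potential with
    ∇φ = ∇ρ/f², then ψ = fφ solves the Schrödinger equation (−Δ + q)ψ = 0 with
    q = Δf/f. -/
theorem statement19 (Ω : Set P3) (hΩ : IsOpen Ω)
    (ρ : P3 → ℝ) (hρ : ContDiffOn ℝ 2 ρ Ω)
    (hharm : ∀ p ∈ Ω, lap3 (fun x => (ρ x : ℂ)) p = 0)
    (f : P3 → ℂ) (hf : ContDiffOn ℝ 2 f Ω) (hf0 : ∀ p ∈ Ω, f p ≠ 0)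
    (hpar : ∀ p ∈ Ω, crossq (gradq f p) (gradq (fun x => (ρ x : ℂ)) p) = 0)
    (φ : P3 → ℂ) (hφ : ContDiffOn ℝ 2 φ Ω)
    (hgrad : ∀ p ∈ Ω, gradq φ p = ((f p) ^ 2)⁻¹ • gradq (fun x => (ρ x : ℂ)) p) :
    ∀ p ∈ Ω,
      -(lap3 (fun x => f x * φ x) p)
        + (lap3 f p / f p) * (f p * φ p) = 0 := by
  intro p hp
  set ρc : P3 → ℂ := fun x => (ρ x : ℂ) with hρc_def
  -- differentiability facts
  have df : ∀ x ∈ Ω, DifferentiableAt ℝ f x :=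
    fun x hx => diffAt_of_cd1 hΩ (hf.of_le (by norm_num)) hx
  have dφ : ∀ x ∈ Ω, DifferentiableAt ℝ φ x :=
    fun x hx => diffAt_of_cd1 hΩ (hφ.of_le (by norm_num)) hx
  have dpdf : ∀ k : Fin 3, DifferentiableAt ℝ (pd k f) p :=
    fun k => diffAt_of_cd1 hΩ (pd_contDiffOn hΩ hf k) hp
  have dpdφ : ∀ k : Fin 3, DifferentiableAt ℝ (pd k φ) p :=
    fun k => diffAt_of_cd1 hΩ (pd_contDiffOn hΩ hφ k) hp
  -- componentwise gradient relation on Ω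
  have hρk : ∀ x ∈ Ω, ∀ k : Fin 3, pd k ρc x = f x * f x * pd k φ x := by
    intro x hx k
    have h := hgrad x hx
    have h2 : pd k φ x = ((f x) ^ 2)⁻¹ * pd k ρc x := by
      fin_cases k
      · exact congrArg QuaternionAlgebra.imI h
      · exact congrArg QuaternionAlgebra.imJ h
      · exact congrArg QuaternionAlgebra.imK h
    have hfx := hf0 x hx
    rw [h2]
    field_simp
  -- second derivatives of ρc at p
  have hsecρ : ∀ k : Fin 3, pd k (pd k ρc) p =
      (pd k f p * f p + f p * pd k f p) * pd k φ p + f p * f p * pd k (pd k φ) p := by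
    intro k
    have h1 : pd k (pd k ρc) p = pd k (fun x => f x * f x * pd k φ x) p :=
      pd_congr hΩ (fun x hx => hρk x hx k) hp k
    rw [h1, pd_mul ((df p hp).fun_mul (df p hp)) (dpdφ k) k,
      pd_mul (df p hp) (df p hp) k]
  -- harmonicity, expanded
  have hsum : pd 0 (pd 0 ρc) p + pd 1 (pd 1 ρc) p + pd 2 (pd 2 ρc) p = 0 := by
    simpa [lap3, Fin.sum_univ_three] using hharm p hp
  rw [hsecρ 0, hsecρ 1, hsecρ 2] at hsum
  -- first derivatives of the product f·φ on Ω
  have hprodk : ∀ x ∈ Ω, ∀ k : Fin 3,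
      pd k (fun y => f y * φ y) x = pd k f x * φ x + f x * pd k φ x :=
    fun x hx k => pd_mul (df x hx) (dφ x hx) k
  -- second derivatives of f·φ at p
  have hsec : ∀ k : Fin 3, pd k (pd k (fun y => f y * φ y)) p =
      (pd k (pd k f) p * φ p + pd k f p * pd k φ p)
        + (pd k f p * pd k φ p + f p * pd k (pd k φ) p) := by
    intro k
    have h1 : pd k (pd k (fun y => f y * φ y)) p =
        pd k (fun x => pd k f x * φ x + f x * pd k φ x) p :=
      pd_congr hΩ (fun x hx => hprodk x hx k) hp k
    rw [h1, pd_add ((dpdf k).fun_mul (dφ p hp)) ((df p hp).fun_mul (dpdφ k)) k,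
      pd_mul (dpdf k) (dφ p hp) k, pd_mul (df p hp) (dpdφ k) k]
  have hfp := hf0 p hp
  simp only [lap3, Fin.sum_univ_three]
  rw [hsec 0, hsec 1, hsec 2]
  field_simp
  apply mul_left_cancel₀ hfp
  linear_combination -hsum
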